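/- Equivalent vertices have equal instantaneous quantum Pagerank: let σ be a permutation of {0,…,N−1} with P_{σ(i),σ(j)} = P_{i,j} for all i, j, and let Σ be its N×N permutation matrix. Then (Σ ⊗ Σ) U_walk = U_walk (Σ ⊗ Σ) and (Σ ⊗ Σ) ψ_0 = ψ_0, where ψ_0 = (1/√N) Σ_{i=0}^{N−1} ψ_i; consequently, for every vertex j and every t ∈ ℕ, the instantaneous quantum Pagerank satisfies Q(σ(j), t) = Q(j, t), where Q(j,t) = ‖(I_N ⊗ e_j†) U_walk^{2t} ψ_0‖². -/
import Mathlib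


open Matrix BigOperators

/-- The `i`-th column state of the transition matrix `P`: `(φ_i)_j = √(P_{j,i})`. -/
noncomputable def colState {N : ℕ} (P : Matrix (Fin N) (Fin N) ℝ) (i : Fin N) :
    Fin N → ℂ :=
  fun j => (Real.sqrt (P j i) : ℂ)

/-- The `i`-th projector state `ψ_i = e_i ⊗ φ_i ∈ ℂ^N ⊗ ℂ^N`. -/
noncomputable def projState {N : ℕ} (P : Matrix (Fin N) (Fin N) ℝ) (i : Fin N) :
    Fin N × Fin N → ℂ :=
  fun p => (if p.1 = i then 1 else 0) * colState P i p.2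

/-- The projection `Π = Σ_i ψ_i ψ_i†`, as a matrix on `ℂ^N ⊗ ℂ^N`. -/
noncomputable def szegedyProj {N : ℕ} (P : Matrix (Fin N) (Fin N) ℝ) :
    Matrix (Fin N × Fin N) (Fin N × Fin N) ℂ :=
  ∑ i : Fin N,
    Matrix.of (fun p q => projState P i p * (starRingEnd ℂ) (projState P i q))

/-- The swap operator `S` on `ℂ^N ⊗ ℂ^N`, determined by `S(u ⊗ v) = v ⊗ u`. -/
def swapOp (N : ℕ) : Matrix (Fin N × Fin N) (Fin N × Fin N) ℂ :=
  Matrix.of (fun p q => if p.1 = q.2 ∧ p.2 = q.1 then 1 else 0)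

/-- The Szegedy walk operator `U_walk = S(2Π − I)`. -/
noncomputable def szegedyWalk {N : ℕ} (P : Matrix (Fin N) (Fin N) ℝ) :
    Matrix (Fin N × Fin N) (Fin N × Fin N) ℂ :=
  swapOp N * ((2 : ℂ) • szegedyProj P - 1)

/-- The initial state `ψ_0 = (1/√N) Σ_i ψ_i` of the quantum Pagerank algorithm. -/
noncomputable def pagerankInit {N : ℕ} (P : Matrix (Fin N) (Fin N) ℝ) :
    Fin N × Fin N → ℂ :=
  fun p => ((Real.sqrt N : ℂ))⁻¹ * ∑ i : Fin N, projState P i p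

/-- The instantaneous quantum Pagerank of vertex `j` at time `t`:
`Q(j,t) = ‖(I_N ⊗ e_j†) U_walk^{2t} ψ_0‖²`. -/
noncomputable def instPagerank {N : ℕ} (P : Matrix (Fin N) (Fin N) ℝ)
    (j : Fin N) (t : ℕ) : ℝ :=
  ∑ a : Fin N,
    Complex.normSq ((szegedyWalk P ^ (2 * t)).mulVec (pagerankInit P) (a, j))

/-- The tensor square `Σ ⊗ Σ` of the permutation matrix of `σ`. -/
def permTensorSq {N : ℕ} (σ : Equiv.Perm (Fin N)) :
    Matrix (Fin N × Fin N) (Fin N × Fin N) ℂ :=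
  Matrix.of (fun p q =>
    (if p.1 = σ q.1 then 1 else 0) * (if p.2 = σ q.2 then 1 else 0))

-- aux lemmas
lemma permTensorSq_mulVec {N : ℕ} (σ : Equiv.Perm (Fin N)) (v : Fin N × Fin N → ℂ)
    (p : Fin N × Fin N) :
    (permTensorSq σ).mulVec v p = v (σ.symm p.1, σ.symm p.2) := by
  unfold permTensorSq Matrix.mulVec dotProduct
  rw [Finset.sum_eq_single (σ.symm p.1, σ.symm p.2)]
  · simp
  · rintro ⟨q1, q2⟩ _ hq
    simp only [Matrix.of_apply]
    by_cases h1 : p.1 = σ q1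
    · by_cases h2 : p.2 = σ q2
      · exact absurd (by simp [Prod.ext_iff, h1, h2]) hq
      · simp [h2]
    · simp [h1]
  · simp

lemma permTensorSq_mul_apply {N : ℕ} (σ : Equiv.Perm (Fin N))
    (A : Matrix (Fin N × Fin N) (Fin N × Fin N) ℂ) (p q : Fin N × Fin N) :
    (permTensorSq σ * A) p q = A (σ.symm p.1, σ.symm p.2) q := by
  rw [Matrix.mul_apply]
  rw [Finset.sum_eq_single (σ.symm p.1, σ.symm p.2)]
  · simp [permTensorSq]
  · rintro ⟨r1, r2⟩ _ hr
    simp only [permTensorSq, Matrix.of_apply]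
    by_cases h1 : p.1 = σ r1
    · by_cases h2 : p.2 = σ r2
      · exact absurd (by simp [Prod.ext_iff, h1, h2]) hr
      · simp [h2]
    · simp [h1]
  · simp

lemma mul_permTensorSq_apply {N : ℕ} (σ : Equiv.Perm (Fin N))
    (A : Matrix (Fin N × Fin N) (Fin N × Fin N) ℂ) (p q : Fin N × Fin N) :
    (A * permTensorSq σ) p q = A p (σ q.1, σ q.2) := by
  rw [Matrix.mul_apply]
  rw [Finset.sum_eq_single (σ q.1, σ q.2)]
  · simp [permTensorSq]
  · rintro ⟨r1, r2⟩ _ hr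
    simp only [permTensorSq, Matrix.of_apply]
    by_cases h1 : r1 = σ q.1
    · by_cases h2 : r2 = σ q.2
      · exact absurd (by simp [Prod.ext_iff, h1, h2]) hr
      · simp [h2]
    · simp [h1]
  · simp

lemma projState_perm {N : ℕ} {P : Matrix (Fin N) (Fin N) ℝ} {σ : Equiv.Perm (Fin N)}
    (hσ : ∀ i j, P (σ i) (σ j) = P i j) (i : Fin N) (p : Fin N × Fin N) :
    projState P (σ i) (σ p.1, σ p.2) = projState P i p := by
  unfold projState colState
  simp only [EmbeddingLike.apply_eq_iff_eq, hσ]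

lemma projState_perm_symm {N : ℕ} {P : Matrix (Fin N) (Fin N) ℝ} {σ : Equiv.Perm (Fin N)}
    (hσ : ∀ i j, P (σ i) (σ j) = P i j) (i : Fin N) (p : Fin N × Fin N) :
    projState P i (σ.symm p.1, σ.symm p.2) = projState P (σ i) p := by
  have := projState_perm hσ i (σ.symm p.1, σ.symm p.2)
  simpa using this.symm

lemma szegedyProj_perm {N : ℕ} {P : Matrix (Fin N) (Fin N) ℝ} {σ : Equiv.Perm (Fin N)}
    (hσ : ∀ i j, P (σ i) (σ j) = P i j) (p q : Fin N × Fin N) :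
    szegedyProj P (σ.symm p.1, σ.symm p.2) q = szegedyProj P p (σ q.1, σ q.2) := by
  unfold szegedyProj
  simp only [Matrix.sum_apply, Matrix.of_apply]
  rw [← Equiv.sum_comp σ
    (fun i => projState P i p * (starRingEnd ℂ) (projState P i (σ q.1, σ q.2)))]
  refine Finset.sum_congr rfl fun i _ => ?_
  rw [projState_perm_symm hσ, projState_perm hσ]

/-- Equivalent vertices have equal instantaneous quantum Pagerank: if `σ` is a
permutation with `P_{σ(i),σ(j)} = P_{i,j}`, then `Σ ⊗ Σ` commutes with `U_walk` and
fixes `ψ_0`, and consequently `Q(σ(j), t) = Q(j, t)` for all `j` and `t`. -/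
theorem equivalent_vertices_equal_pagerank (N : ℕ) (hN : 1 ≤ N)
    (P : Matrix (Fin N) (Fin N) ℝ)
    (hnonneg : ∀ j i, 0 ≤ P j i) (hcol : ∀ i, ∑ j, P j i = 1)
    (σ : Equiv.Perm (Fin N)) (hσ : ∀ i j, P (σ i) (σ j) = P i j) :
    permTensorSq σ * szegedyWalk P = szegedyWalk P * permTensorSq σ ∧
    (permTensorSq σ).mulVec (pagerankInit P) = pagerankInit P ∧
    (∀ (j : Fin N) (t : ℕ), instPagerank P (σ j) t = instPagerank P j t) := by
  set M := permTensorSq σ with hM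
  -- M commutes with Π
  have hProj : M * szegedyProj P = szegedyProj P * M := by
    ext p q
    rw [permTensorSq_mul_apply, mul_permTensorSq_apply]
    exact szegedyProj_perm hσ p q
  -- M commutes with swap
  have hS : M * swapOp N = swapOp N * M := by
    ext p q
    rw [permTensorSq_mul_apply, mul_permTensorSq_apply]
    simp only [swapOp, Matrix.of_apply]
    congr 1
    rw [eq_iff_iff]
    constructor
    · rintro ⟨h1, h2⟩
      constructor
      · rw [← h1]; simp
      · rw [← h2]; simp
    · rintro ⟨h1, h2⟩
      constructor
      · rw [h1]; simp
      · rw [h2]; simp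
  have hX : M * ((2 : ℂ) • szegedyProj P - 1) = ((2 : ℂ) • szegedyProj P - 1) * M := by
    rw [Matrix.mul_sub, Matrix.sub_mul, Matrix.mul_smul, Matrix.smul_mul, hProj,
      Matrix.mul_one, Matrix.one_mul]
  have hcomm : M * szegedyWalk P = szegedyWalk P * M := by
    unfold szegedyWalk
    rw [← Matrix.mul_assoc, hS, Matrix.mul_assoc, hX, ← Matrix.mul_assoc]
  have hfix : M.mulVec (pagerankInit P) = pagerankInit P := by
    funext p
    rw [permTensorSq_mulVec]
    unfold pagerankInit
    congr 1
    rw [← Equiv.sum_comp σ (fun i => projState P i p)]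
    exact Finset.sum_congr rfl fun i _ => projState_perm_symm hσ i p
  refine ⟨hcomm, hfix, fun j t => ?_⟩
  set v := (szegedyWalk P ^ (2 * t)).mulVec (pagerankInit P) with hv
  have hc : Commute M (szegedyWalk P) := hcomm
  have hMv : M.mulVec v = v := by
    rw [hv, Matrix.mulVec_mulVec, (hc.pow_right (2 * t)).eq,
      ← Matrix.mulVec_mulVec, hfix]
  have key : ∀ a b : Fin N, v (σ a, σ b) = v (a, b) := by
    intro a b
    have := congrFun hMv (σ a, σ b)
    rw [permTensorSq_mulVec] at this
    simpa using this.symm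
  unfold instPagerank
  rw [← Equiv.sum_comp σ
    (fun a => Complex.normSq ((szegedyWalk P ^ (2 * t)).mulVec (pagerankInit P) (a, σ j)))]
  exact Finset.sum_congr rfl fun a _ => by rw [show (szegedyWalk P ^ (2 * t) *ᵥ pagerankInit P) = v from hv.symm, key a j]
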